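/- arXiv:2506.03223 — 3 statements merged into one kernel-verified Lean document; each statement's English description precedes it below -/
import Mathlib

section
/- For every integer ℓ ≥ 8 with ℓ not divisible by 3, there exists a homomorphism from the tight ℓ-cycle C_ℓ³ to C₄³ and a homomorphism from C_ℓ³ to C₅³. Moreover, there exists a homomorphism from C₇³ to each of C₄³, F₁, and F₂. -/
open scoped Classical

noncomputable section

/-- The tight `ℓ`-cycle `C_ℓ³`: the 3-graph on `ZMod ℓ` (the vertex set `{1,…,ℓ}` in cyclic
order) whose edges are the `ℓ` consecutive triples `{i, i+1, i+2}` in the cyclic order. -/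
def tightCycle (ℓ : ℕ) : Finset (Finset (ZMod ℓ)) :=
  (Finset.range ℓ).image
    (fun i => ({(i : ZMod ℓ), (i : ZMod ℓ) + 1, (i : ZMod ℓ) + 2} : Finset (ZMod ℓ)))

/-- The 3-graph `F₁` on the vertex set `{1,2,3,4,5}` (realised inside `ZMod 5`). -/
def F1 : Finset (Finset (ZMod 5)) :=
  {({1, 2, 3} : Finset (ZMod 5)), {1, 3, 4}, {1, 4, 2}, {1, 4, 5}, {2, 3, 4}}

/-- The 3-graph `F₂` on the vertex set `{1,2,3,4,5,6}` (realised inside `ZMod 6`). -/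
def F2 : Finset (Finset (ZMod 6)) :=
  {({1, 2, 3} : Finset (ZMod 6)), {1, 3, 4}, {1, 4, 5}, {1, 5, 6}, {1, 6, 2}, {2, 3, 4}}

/-- `IsHom f F G`: `f` is a homomorphism of 3-graphs from `F` to `G`, i.e. a (not
necessarily injective) vertex map such that the image of every edge of `F` has three
distinct vertices and is an edge of `G`. -/
def IsHom {α β : Type} [DecidableEq β] (f : α → β)
    (F : Finset (Finset α)) (G : Finset (Finset β)) : Prop :=
  ∀ e ∈ F, (e.image f).card = 3 ∧ e.image f ∈ G

/- ### Auxiliary material -/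

lemma mem_tightCycle {ℓ : ℕ} {e : Finset (ZMod ℓ)} :
    e ∈ tightCycle ℓ ↔ ∃ i < ℓ,
      ({(i : ZMod ℓ), (i : ZMod ℓ) + 1, (i : ZMod ℓ) + 2} : Finset (ZMod ℓ)) = e := by
  simp [tightCycle]

lemma edge_mem_tc {k : ℕ} [NeZero k] (a : ZMod k) :
    ({a, a + 1, a + 2} : Finset (ZMod k)) ∈ tightCycle k :=
  mem_tightCycle.2 ⟨a.val, ZMod.val_lt a, by rw [ZMod.natCast_val, ZMod.cast_id]⟩

lemma card3 {k : ℕ} (hk : 3 ≤ k) (a : ZMod k) :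
    ({a, a + 1, a + 2} : Finset (ZMod k)).card = 3 := by
  haveI : NeZero k := ⟨by omega⟩
  have hno : ∀ c : ℕ, 0 < c → c < k → ((c : ℕ) : ZMod k) ≠ 0 := by
    intro c hc1 hc2 h
    rw [ZMod.natCast_eq_zero_iff] at h
    have := Nat.le_of_dvd hc1 h
    omega
  have h1 : (1 : ZMod k) ≠ 0 := by
    have := hno 1 (by omega) (by omega); simpa using this
  have h2 : (2 : ZMod k) ≠ 0 := by
    have := hno 2 (by omega) (by omega); simpa using this
  have d1 : a ≠ a + 1 := by
    intro h; apply h1; have := h.symm; rwa [add_eq_left] at this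
  have d2 : a ≠ a + 2 := by
    intro h; apply h2; have := h.symm; rwa [add_eq_left] at this
  have d3 : a + 1 ≠ a + 2 := by
    intro h
    apply h1
    have : (1 : ZMod k) = 2 := by exact add_left_cancel h
    linear_combination -this
  rw [Finset.card_insert_of_notMem (by simp [d1, d2]),
    Finset.card_insert_of_notMem (by simp [d3]), Finset.card_singleton]

/-- prefix-sum function: `n` steps of `+1`, with the steps at odd indices `< 2m`
replaced by `-2`. -/
def gg (m n : ℕ) : ℤ := n - 3 * min (n / 2) m

lemma gg_even (m n : ℕ) (h : n % 2 = 0) : gg m (n + 1) = gg m n + 1 := by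
  unfold gg
  have h2 : (n + 1) / 2 = n / 2 := by omega
  rw [h2]; push_cast; ring

lemma gg_odd (m n : ℕ) (h : n % 2 = 1) :
    gg m (n + 1) = gg m n + 1 ∨ gg m (n + 1) = gg m n - 2 := by
  unfold gg
  have h2 : (n + 1) / 2 = n / 2 + 1 := by omega
  rw [h2]
  rcases le_or_gt m (n / 2) with h3 | h3
  · left
    rw [min_eq_right h3, min_eq_right (by omega)]
    push_cast; ring
  · right
    rw [min_eq_left (by omega), min_eq_left (by omega)]
    push_cast; ring

lemma exists_hom (k ℓ m : ℕ) (hk : 3 ≤ k) (hℓ : 7 ≤ ℓ) (hm : 2 * m ≤ ℓ)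
    (hmod : (ℓ : ZMod k) = 3 * (m : ZMod k)) :
    ∃ f : ZMod ℓ → ZMod k, IsHom f (tightCycle ℓ) (tightCycle k) := by
  haveI : NeZero ℓ := ⟨by omega⟩
  haveI : NeZero k := ⟨by omega⟩
  set F : ZMod ℓ → ZMod k := fun x => ((gg m x.val : ℤ) : ZMod k) with hF
  have hzero : ((ℓ - 3 * m : ℤ) : ZMod k) = 0 := by
    push_cast
    rw [hmod]; ring
  -- values of F on casts of naturals
  have hval : ∀ j : ℕ, F (j : ZMod ℓ) = ((gg m (j % ℓ) : ℤ) : ZMod k) := by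
    intro j
    simp [hF, ZMod.val_natCast]
  have hwrap : ∀ j : ℕ, j ≤ ℓ + 1 → ((gg m (j % ℓ) : ℤ) : ZMod k) = ((gg m j : ℤ) : ZMod k) := by
    intro j hj
    rcases lt_or_ge j ℓ with h | h
    · rw [Nat.mod_eq_of_lt h]
    · rcases Nat.lt_or_ge j (ℓ + 1) with h1 | h1
      · have hj' : j = ℓ := by omega
        rw [hj', Nat.mod_self]
        have g0 : gg m 0 = 0 := by simp [gg]
        have gl : gg m ℓ = (ℓ : ℤ) - 3 * m := by
          unfold gg
          rw [min_eq_right (show m ≤ ℓ / 2 by omega)]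
        rw [g0, gl]
        push_cast
        rw [hmod]
        ring
      · have hj' : j = ℓ + 1 := by omega
        rw [hj', show (ℓ + 1) % ℓ = 1 by rw [Nat.add_mod_left, Nat.mod_eq_of_lt (by omega)]]
        have g1 : gg m 1 = 1 := by simp [gg]
        have gl : gg m (ℓ + 1) = (ℓ : ℤ) + 1 - 3 * m := by
          unfold gg
          rw [min_eq_right (show m ≤ (ℓ + 1) / 2 by omega)]
          push_cast
          ring
        rw [g1, gl]
        push_cast
        rw [hmod]
        ring
  -- the key triple property
  have hT : ∀ n : ℕ,
      (({((gg m n : ℤ) : ZMod k), ((gg m (n + 1) : ℤ) : ZMod k),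
        ((gg m (n + 2) : ℤ) : ZMod k)} : Finset (ZMod k)) ∈ tightCycle k) ∧
      (({((gg m n : ℤ) : ZMod k), ((gg m (n + 1) : ℤ) : ZMod k),
        ((gg m (n + 2) : ℤ) : ZMod k)} : Finset (ZMod k))).card = 3 := by
    intro n
    set b : ZMod k := ((gg m n : ℤ) : ZMod k) with hb
    rcases Nat.mod_two_eq_zero_or_one n with he | ho
    · -- n even : first step +1
      have h1 : gg m (n + 1) = gg m n + 1 := gg_even m n he
      have hodd : (n + 1) % 2 = 1 := by omega
      have c1 : ((gg m (n + 1) : ℤ) : ZMod k) = b + 1 := by rw [h1]; push_cast; ring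
      rcases gg_odd m (n + 1) hodd with h2 | h2
      · have c2 : ((gg m (n + 2) : ℤ) : ZMod k) = b + 2 := by
          rw [show n + 2 = n + 1 + 1 from rfl, h2, h1]; push_cast; ring
        rw [c1, c2]
        exact ⟨edge_mem_tc b, card3 hk b⟩
      · have c2 : ((gg m (n + 2) : ℤ) : ZMod k) = b - 1 := by
          rw [show n + 2 = n + 1 + 1 from rfl, h2, h1]; push_cast; ring
        rw [c1, c2]
        have hset : ({b, b + 1, b - 1} : Finset (ZMod k))
            = {b - 1, (b - 1) + 1, (b - 1) + 2} := by
          have e1 : b - 1 + 1 = b := by ring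
          have e2 : b - 1 + 2 = b + 1 := by ring
          rw [e1, e2]
          ext x
          simp only [Finset.mem_insert, Finset.mem_singleton]
          tauto
        rw [hset]
        exact ⟨edge_mem_tc (b - 1), card3 hk (b - 1)⟩
    · -- n odd : second step +1
      have heven : (n + 1) % 2 = 0 := by omega
      have h2 : gg m (n + 2) = gg m (n + 1) + 1 := by
        rw [show n + 2 = n + 1 + 1 from rfl]; exact gg_even m (n + 1) heven
      rcases gg_odd m n ho with h1 | h1
      · have c1 : ((gg m (n + 1) : ℤ) : ZMod k) = b + 1 := by rw [h1]; push_cast; ring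
        have c2 : ((gg m (n + 2) : ℤ) : ZMod k) = b + 2 := by
          rw [h2, h1]; push_cast; ring
        rw [c1, c2]
        exact ⟨edge_mem_tc b, card3 hk b⟩
      · have c1 : ((gg m (n + 1) : ℤ) : ZMod k) = b - 2 := by rw [h1]; push_cast; ring
        have c2 : ((gg m (n + 2) : ℤ) : ZMod k) = b - 1 := by
          rw [h2, h1]; push_cast; ring
        rw [c1, c2]
        have hset : ({b, b - 2, b - 1} : Finset (ZMod k))
            = {b - 2, (b - 2) + 1, (b - 2) + 2} := by
          have e1 : b - 2 + 1 = b - 1 := by ring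
          have e2 : b - 2 + 2 = b := by ring
          rw [e1, e2]
          ext x
          simp only [Finset.mem_insert, Finset.mem_singleton]
          tauto
        rw [hset]
        exact ⟨edge_mem_tc (b - 2), card3 hk (b - 2)⟩
  refine ⟨F, ?_⟩
  intro e he
  obtain ⟨n, hn, rfl⟩ := mem_tightCycle.1 he
  have e1 : ((n : ZMod ℓ) + 1) = ((n + 1 : ℕ) : ZMod ℓ) := by push_cast; ring
  have e2 : ((n : ZMod ℓ) + 2) = ((n + 2 : ℕ) : ZMod ℓ) := by push_cast; ring
  have himg : Finset.image F {(n : ZMod ℓ), (n : ZMod ℓ) + 1, (n : ZMod ℓ) + 2}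
      = {F (n : ZMod ℓ), F ((n + 1 : ℕ) : ZMod ℓ), F ((n + 2 : ℕ) : ZMod ℓ)} := by
    rw [e1, e2]
    simp [Finset.image_insert]
  rw [himg, hval n, hval (n + 1), hval (n + 2),
    hwrap n (by omega), hwrap (n + 1) (by omega), hwrap (n + 2) (by omega)]
  exact ⟨(hT n).2, (hT n).1⟩

/- concrete maps for the `ℓ = 7` cases -/

def w4 : ZMod 7 → ZMod 4 := fun x => ![0, 1, 3, 0, 1, 2, 3] ⟨x.val, ZMod.val_lt x⟩
def wF1 : ZMod 7 → ZMod 5 := fun x => ![0, 1, 4, 2, 3, 1, 4] ⟨x.val, ZMod.val_lt x⟩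
def wF2 : ZMod 7 → ZMod 6 := fun x => ![0, 1, 2, 3, 4, 1, 5] ⟨x.val, ZMod.val_lt x⟩

/-- **Claim (homomorphisms of tight cycles).** For every `ℓ ≥ 8` not divisible by 3
there are homomorphisms `C_ℓ³ → C₄³` and `C_ℓ³ → C₅³`; moreover there are
homomorphisms `C₇³ → C₄³`, `C₇³ → F₁` and `C₇³ → F₂`. -/
theorem tight_cycle_homomorphisms :
    (∀ ℓ : ℕ, 8 ≤ ℓ → ¬ (3 ∣ ℓ) →
      (∃ f : ZMod ℓ → ZMod 4, IsHom f (tightCycle ℓ) (tightCycle 4)) ∧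
      (∃ f : ZMod ℓ → ZMod 5, IsHom f (tightCycle ℓ) (tightCycle 5))) ∧
    (∃ f : ZMod 7 → ZMod 4, IsHom f (tightCycle 7) (tightCycle 4)) ∧
    (∃ f : ZMod 7 → ZMod 5, IsHom f (tightCycle 7) F1) ∧
    (∃ f : ZMod 7 → ZMod 6, IsHom f (tightCycle 7) F2) := by
  refine ⟨?_, ?_, ?_, ?_⟩
  · intro ℓ hℓ _h3
    constructor
    · refine exists_hom 4 ℓ (3 * ℓ % 4) (by norm_num) (by omega) ?_ ?_
      · have := Nat.mod_lt (3 * ℓ) (show 0 < 4 by norm_num)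
        omega
      · rw [ZMod.natCast_mod]
        push_cast
        have h4 : ((4 : ℕ) : ZMod 4) = 0 := ZMod.natCast_self 4
        push_cast at h4
        linear_combination (-2 * (ℓ : ZMod 4)) * h4
    · refine exists_hom 5 ℓ (2 * ℓ % 5) (by norm_num) (by omega) ?_ ?_
      · have := Nat.mod_lt (2 * ℓ) (show 0 < 5 by norm_num)
        omega
      · rw [ZMod.natCast_mod]
        push_cast
        have h5 : ((5 : ℕ) : ZMod 5) = 0 := ZMod.natCast_self 5
        push_cast at h5
        linear_combination (-(ℓ : ZMod 5)) * h5
  · refine exists_hom 4 7 1 (by norm_num) (by norm_num) (by norm_num) (by decide)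
  · refine ⟨wF1, ?_⟩
    intro e he
    obtain ⟨i, hi, rfl⟩ := mem_tightCycle.1 he
    constructor <;>
      · simp only [Finset.image_insert, Finset.image_singleton]
        interval_cases i <;> decide
  · refine ⟨wF2, ?_⟩
    intro e he
    obtain ⟨i, hi, rfl⟩ := mem_tightCycle.1 he
    constructor <;>
      · simp only [Finset.image_insert, Finset.image_singleton]
        interval_cases i <;> decide

end
end

section
/- Let r ≥ 2 and let F be a blowup-invariant family of r-graphs. If H is an F-free r-graph on n vertices with exactly ex(n,F) edges, then Δ(H) − δ(H) ≤ C(n−2, r−2), where Δ(H) and δ(H) are the maximum and minimum degree of H. -/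
open scoped Classical

noncomputable section

/-- `Contains F H`: the hypergraph `H` contains a copy of `F` as a (not necessarily
induced) subgraph, i.e. there is an injection of vertices mapping edges to edges. -/
def Contains {α β : Type} [DecidableEq β] (F : Finset (Finset α))
    (H : Finset (Finset β)) : Prop :=
  ∃ f : α → β, Function.Injective f ∧ ∀ e ∈ F, e.image f ∈ H

/-- `H` is `F`-free for a family `F` of hypergraphs: `H` contains no member of `F`. -/
def FamFree (F : Set (Σ m : ℕ, Finset (Finset (Fin m)))) {n : ℕ}
    (H : Finset (Finset (Fin n))) : Prop :=
  ∀ p ∈ F, ¬ Contains p.2 H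

/-- `H` is `r`-uniform: every edge has exactly `r` vertices. -/
def IsUniform (r : ℕ) {n : ℕ} (H : Finset (Finset (Fin n))) : Prop :=
  ∀ e ∈ H, e.card = r

/-- The Turán number `ex(n, F)` for `r`-graphs: the maximum number of edges of an
`F`-free `r`-uniform hypergraph on `n` vertices. -/
def exNum (r : ℕ) (F : Set (Σ m : ℕ, Finset (Finset (Fin m)))) (n : ℕ) : ℕ :=
  sSup {k : ℕ | ∃ H : Finset (Finset (Fin n)), IsUniform r H ∧ FamFree F H ∧ H.card = k}

/-- The Turán density `π(F) = inf_{n ≥ r} ex(n,F)/C(n,r)`, which equals the limit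
`lim_{n→∞} ex(n,F)/C(n,r)` since the ratio is non-increasing in `n`. -/
def turanDensity (r : ℕ) (F : Set (Σ m : ℕ, Finset (Finset (Fin m)))) : ℝ :=
  sInf {x : ℝ | ∃ n : ℕ, r ≤ n ∧ x = (exNum r F n : ℝ) / (n.choose r : ℝ)}

/-- The blowup of the `r`-graph `H` on `Fin m` along a map `g : Fin N → Fin m`
(the fibre of `g` over `v` is the set of clones of `v`): its edges are the `r`-sets
meeting `r` distinct fibres whose images form an edge of `H`. Every blowup of `H`
arises this way. -/
def blowup (r : ℕ) {m N : ℕ} (g : Fin N → Fin m) (H : Finset (Finset (Fin m))) :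
    Finset (Finset (Fin N)) :=
  Finset.univ.filter (fun e : Finset (Fin N) =>
    e.card = r ∧ (e.image g).card = r ∧ e.image g ∈ H)

/-- The family `F` is blowup-invariant: every blowup of every `F`-free `r`-graph
is `F`-free. -/
def BlowupInvariant (r : ℕ) (F : Set (Σ m : ℕ, Finset (Finset (Fin m)))) : Prop :=
  ∀ (m : ℕ) (H : Finset (Finset (Fin m))), IsUniform r H → FamFree F H →
    ∀ (N : ℕ) (g : Fin N → Fin m), FamFree F (blowup r g H)

/-- The degree of a vertex `v`: the number of edges of `H` containing `v`. -/
def degH {n : ℕ} (H : Finset (Finset (Fin n))) (v : Fin n) : ℕ :=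
  (H.filter (fun e => v ∈ e)).card

/-- The maximum degree `Δ(H)`. -/
def maxDeg {n : ℕ} (H : Finset (Finset (Fin n))) : ℕ :=
  Finset.univ.sup (degH H)

/-- The minimum degree `δ(H)`. -/
def minDeg {n : ℕ} (H : Finset (Finset (Fin n))) : ℕ :=
  sInf (Set.range (degH H))

/-- **Proposition (smoothness for blowup-invariant families).** Let `r ≥ 2` and let `F`
be a blowup-invariant family of `r`-graphs. Every `F`-free `r`-graph on `n` vertices
with exactly `ex(n,F)` edges satisfies `Δ(H) − δ(H) ≤ C(n−2, r−2)`. -/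
theorem blowup_invariant_degree_gap (r : ℕ) (hr : 2 ≤ r)
    (F : Set (Σ m : ℕ, Finset (Finset (Fin m)))) (hinv : BlowupInvariant r F)
    (n : ℕ) (H : Finset (Finset (Fin n))) (hH : IsUniform r H) (hfree : FamFree F H)
    (hmax : H.card = exNum r F n) :
    maxDeg H ≤ minDeg H + (n - 2).choose (r - 2) := by
  classical
  rcases isEmpty_or_nonempty (Fin n) with hE | hNE
  · simp [maxDeg, Finset.univ_eq_empty]
  obtain ⟨u, -, hu⟩ := Finset.exists_mem_eq_sup Finset.univ Finset.univ_nonempty (degH H)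
  obtain ⟨w, hw⟩ := Set.mem_range.mp (Nat.sInf_mem (Set.range_nonempty (degH H)))
  rw [show maxDeg H = degH H u from hu, show minDeg H = degH H w from hw.symm]
  by_cases huw : u = w
  · subst huw; omega
  -- the blowup map: replace w by a clone of u
  set g : Fin n → Fin n := fun x => if x = w then u else x with hg
  set H' := blowup r g H with hH'
  -- H' is uniform and F-free, hence its size is at most ex(n,F) = |H|
  have hunif' : IsUniform r H' := by
    intro e he
    rw [hH', blowup, Finset.mem_filter] at he
    exact he.2.1
  have hfree' : FamFree F H' := hinv n H hH hfree n g
  have hbdd : BddAbove {k : ℕ | ∃ H'' : Finset (Finset (Fin n)),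
      IsUniform r H'' ∧ FamFree F H'' ∧ H''.card = k} := by
    refine ⟨Fintype.card (Finset (Fin n)), ?_⟩
    rintro k ⟨H'', -, -, rfl⟩
    exact Finset.card_le_univ H''
  have hle : H'.card ≤ H.card := by
    rw [hmax]
    exact le_csSup hbdd ⟨H', hunif', hfree', rfl⟩
  -- the key sets
  set A := H.filter (fun e => w ∉ e) with hAdef
  set D := H.filter (fun e => u ∈ e ∧ w ∉ e) with hDdef
  set C2 := H.filter (fun e => u ∈ e ∧ w ∈ e) with hC2def
  set clone : Finset (Fin n) → Finset (Fin n) := fun e => insert w (e.erase u) with hclone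
  set B := D.image clone with hBdef
  -- |A| + deg w = |H|
  have hAcard : degH H w + A.card = H.card := by
    rw [degH, hAdef]
    exact Finset.card_filter_add_card_filter_not _
  -- deg u = |D| + |C2|
  have hsplit : H.filter (fun e => u ∈ e) = D ∪ C2 := by
    ext e
    simp only [hDdef, hC2def, Finset.mem_filter, Finset.mem_union]
    tauto
  have hdisjDC : Disjoint D C2 := by
    rw [Finset.disjoint_left]
    intro e he he'
    rw [hDdef, Finset.mem_filter] at he
    rw [hC2def, Finset.mem_filter] at he'
    exact he.2.2 he'.2.2
  have hdegu : degH H u = D.card + C2.card := by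
    rw [degH, hsplit, Finset.card_union_of_disjoint hdisjDC]
  -- clone is injective on D
  have hcloneInv : ∀ e ∈ D, insert u ((clone e).erase w) = e := by
    intro e he
    rw [hDdef, Finset.mem_filter] at he
    have hwnot : w ∉ e.erase u := fun h => he.2.2 (Finset.mem_of_mem_erase h)
    rw [hclone]
    simp only
    rw [Finset.erase_insert hwnot, Finset.insert_erase he.2.1]
  have hBcard : B.card = D.card := by
    rw [hBdef]
    apply Finset.card_image_of_injOn
    intro e1 h1 e2 h2 heq
    rw [← hcloneInv e1 h1, ← hcloneInv e2 h2, heq]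
  -- A and B are both inside H'
  have hAsub : A ⊆ H' := by
    intro e he
    rw [hAdef, Finset.mem_filter] at he
    have himg : e.image g = e := by
      rw [show e.image g = e.image id from Finset.image_congr ?_, Finset.image_id]
      intro x hx
      simp only [hg, id]
      rw [if_neg]
      intro hxw
      exact he.2 (hxw ▸ hx)
    rw [hH', blowup, Finset.mem_filter]
    exact ⟨Finset.mem_univ _, hH e he.1, by rw [himg]; exact hH e he.1, by rw [himg]; exact he.1⟩
  have hBsub : B ⊆ H' := by
    intro e' he'
    rw [hBdef, Finset.mem_image] at he'
    obtain ⟨e, he, rfl⟩ := he'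
    rw [hDdef, Finset.mem_filter] at he
    have hwnot : w ∉ e.erase u := fun h => he.2.2 (Finset.mem_of_mem_erase h)
    have hunotin : u ∉ e.erase u := Finset.notMem_erase u e
    have hcard : (clone e).card = r := by
      rw [hclone]
      simp only
      rw [Finset.card_insert_of_notMem hwnot, Finset.card_erase_of_mem he.2.1, hH e he.1]
      omega
    have himg : (clone e).image g = e := by
      rw [hclone]
      simp only
      rw [Finset.image_insert]
      have h1 : g w = u := by simp [hg]
      have h2 : (e.erase u).image g = e.erase u := by
        rw [show (e.erase u).image g = (e.erase u).image id from Finset.image_congr ?_,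
          Finset.image_id]
        intro x hx
        simp only [hg, id]
        rw [if_neg]
        intro hxw
        exact hwnot (hxw ▸ hx)
      rw [h1, h2, Finset.insert_erase he.2.1]
    rw [hH', blowup, Finset.mem_filter]
    exact ⟨Finset.mem_univ _, hcard, by rw [himg]; exact hH e he.1, by rw [himg]; exact he.1⟩
  have hdisjAB : Disjoint A B := by
    rw [Finset.disjoint_left]
    intro e he he'
    rw [hAdef, Finset.mem_filter] at he
    rw [hBdef, Finset.mem_image] at he'
    obtain ⟨e0, -, rfl⟩ := he'
    exact he.2 (Finset.mem_insert_self w _)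
  have hunion : A.card + B.card ≤ H'.card := by
    rw [← Finset.card_union_of_disjoint hdisjAB]
    exact Finset.card_le_card (Finset.union_subset hAsub hBsub)
  -- so |B| ≤ deg w
  have hBle : B.card ≤ degH H w := by omega
  -- codegree bound: |C2| ≤ C(n-2, r-2)
  have hC2le : C2.card ≤ (n - 2).choose (r - 2) := by
    have hcardn : (((Finset.univ : Finset (Fin n)).erase u).erase w).card = n - 2 := by
      have hwm : w ∈ (Finset.univ : Finset (Fin n)).erase u :=
        Finset.mem_erase.mpr ⟨fun h => huw h.symm, Finset.mem_univ _⟩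
      rw [Finset.card_erase_of_mem hwm, Finset.card_erase_of_mem (Finset.mem_univ u),
        Finset.card_univ, Fintype.card_fin]
      omega
    have hmap : ∀ e ∈ C2, (e.erase u).erase w ∈
        Finset.powersetCard (r - 2) (((Finset.univ : Finset (Fin n)).erase u).erase w) := by
      intro e he
      rw [hC2def, Finset.mem_filter] at he
      rw [Finset.mem_powersetCard]
      constructor
      · exact Finset.erase_subset_erase w (Finset.erase_subset_erase u (Finset.subset_univ e))
      · have hwm : w ∈ e.erase u := Finset.mem_erase.mpr ⟨fun h => huw h.symm, he.2.2⟩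
        rw [Finset.card_erase_of_mem hwm, Finset.card_erase_of_mem he.2.1, hH e he.1]
        omega
    have hinj2 : ∀ e1 ∈ C2, ∀ e2 ∈ C2,
        (e1.erase u).erase w = (e2.erase u).erase w → e1 = e2 := by
      have hrec : ∀ e ∈ C2, insert u (insert w ((e.erase u).erase w)) = e := by
        intro e he
        rw [hC2def, Finset.mem_filter] at he
        have hwm : w ∈ e.erase u := Finset.mem_erase.mpr ⟨fun h => huw h.symm, he.2.2⟩
        rw [Finset.insert_erase hwm, Finset.insert_erase he.2.1]
      intro e1 h1 e2 h2 heq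
      rw [← hrec e1 h1, ← hrec e2 h2, heq]
    calc C2.card ≤ (Finset.powersetCard (r - 2)
          (((Finset.univ : Finset (Fin n)).erase u).erase w)).card :=
        Finset.card_le_card_of_injOn _ hmap hinj2
      _ = (n - 2).choose (r - 2) := by rw [Finset.card_powersetCard, hcardn]
  omega
end
end

section
/- Let r ≥ 2 and let F be a family of r-graphs. For every δ > 0 there exists N₀ such that the following holds for all n ≥ N₀. If H is an F-free r-graph on n vertices with |H| ≥ (π(F)/r! − δ)·n^r, then the set Z_δ(H) := { v ∈ V(H) : d_H(v) ≤ (π(F)/(r−1)! − 4δ^{1/2})·n^{r−1} } has size at most δ^{1/2}·n. -/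
open scoped Classical

noncomputable section

section Aux

variable {F : Set (Σ m : ℕ, Finset (Finset (Fin m)))}

lemma contains_mono {α β : Type} [DecidableEq β] {P : Finset (Finset α)}
    {H H' : Finset (Finset β)} (h : H' ⊆ H) (hc : Contains P H') : Contains P H := by
  obtain ⟨f, hf, he⟩ := hc
  exact ⟨f, hf, fun e heF => h (he e heF)⟩

lemma famFree_subset {n : ℕ} {H H' : Finset (Finset (Fin n))} (h : H' ⊆ H)
    (hH : FamFree F H) : FamFree F H' :=
  fun p hp hc => hH p hp (contains_mono h hc)

lemma card_le_exNum {r n : ℕ} {H : Finset (Finset (Fin n))} (hu : IsUniform r H)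
    (hf : FamFree F H) : H.card ≤ exNum r F n := by
  apply le_csSup
  · exact ⟨Fintype.card (Finset (Fin n)), fun k ⟨H', _, _, hk⟩ => hk ▸ Finset.card_le_univ H'⟩
  · exact ⟨H, hu, hf, rfl⟩

/-- Transfer: an `F`-free uniform hypergraph whose edges live inside the range of an
injection from `Fin a` has at most `ex(a, F)` edges. -/
lemma card_le_exNum_of_embed {r a b : ℕ} (φ : Fin a → Fin b) (hφ : Function.Injective φ)
    {H : Finset (Finset (Fin b))} (hu : IsUniform r H) (hf : FamFree F H)
    (hrange : ∀ e ∈ H, ∀ v ∈ e, ∃ i, φ i = v) : H.card ≤ exNum r F a := by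
  classical
  set H'' : Finset (Finset (Fin a)) :=
    Finset.univ.filter (fun d => d.image φ ∈ H) with hH''
  have hmem : ∀ d : Finset (Fin a), d ∈ H'' ↔ d.image φ ∈ H := by
    intro d; simp [hH'']
  have hu'' : IsUniform r H'' := by
    intro d hd
    rw [← Finset.card_image_of_injective d hφ]
    exact hu _ ((hmem d).1 hd)
  have hf'' : FamFree F H'' := by
    intro p hp hc
    obtain ⟨f, hfinj, hfe⟩ := hc
    refine hf p hp ⟨φ ∘ f, hφ.comp hfinj, fun e he => ?_⟩
    have := (hmem _).1 (hfe e he)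
    rwa [Finset.image_image] at this
  have hcard : H.card ≤ H''.card := by
    apply Finset.card_le_card_of_injOn (fun e => Finset.univ.filter (fun i => φ i ∈ e))
    · intro e he
      simp only [Finset.mem_coe]
      rw [hmem]
      have : (Finset.univ.filter (fun i => φ i ∈ e)).image φ = e := by
        apply Finset.ext
        intro v
        simp only [Finset.mem_image, Finset.mem_filter, Finset.mem_univ, true_and]
        constructor
        · rintro ⟨i, hi, rfl⟩; exact hi
        · intro hv
          obtain ⟨i, hi⟩ := hrange e he v hv
          exact ⟨i, hi ▸ hv, hi⟩
      rwa [this]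
    · intro e₁ h₁ e₂ h₂ heq
      have key : ∀ e ∈ H, (Finset.univ.filter (fun i => φ i ∈ e)).image φ = e := by
        intro e he
        apply Finset.ext
        intro v
        simp only [Finset.mem_image, Finset.mem_filter, Finset.mem_univ, true_and]
        constructor
        · rintro ⟨i, hi, rfl⟩; exact hi
        · intro hv
          obtain ⟨i, hi⟩ := hrange e he v hv
          exact ⟨i, hi ▸ hv, hi⟩
      simp only [] at heq
      rw [← key e₁ h₁, ← key e₂ h₂, heq]
  exact hcard.trans (card_le_exNum hu'' hf'')

lemma exNum_le_choose (r : ℕ) (F : Set (Σ m : ℕ, Finset (Finset (Fin m)))) (n : ℕ) :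
    exNum r F n ≤ n.choose r := by
  apply csSup_le'
  rintro k ⟨H, hu, _, rfl⟩
  have hsub : H ⊆ Finset.powersetCard r (Finset.univ : Finset (Fin n)) := by
    intro e he
    rw [Finset.mem_powersetCard_univ]
    exact hu e he
  calc H.card ≤ (Finset.powersetCard r (Finset.univ : Finset (Fin n))).card :=
        Finset.card_le_card hsub
    _ = n.choose r := by rw [Finset.card_powersetCard, Finset.card_univ, Fintype.card_fin]

lemma choose_identity {r m : ℕ} (h : r ≤ m) :
    (m + 1 - r) * (m + 1).choose r = (m + 1) * m.choose r := by
  have hpos : 0 < r.factorial * (m - r).factorial :=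
    Nat.mul_pos r.factorial_pos (m - r).factorial_pos
  apply Nat.eq_of_mul_eq_mul_right hpos
  have h1 : (m + 1).choose r * r.factorial * (m + 1 - r).factorial = (m + 1).factorial :=
    Nat.choose_mul_factorial_mul_factorial (h.trans (Nat.le_succ m))
  have h2 : m.choose r * r.factorial * (m - r).factorial = m.factorial :=
    Nat.choose_mul_factorial_mul_factorial h
  have h4 : (m + 1 - r).factorial = (m + 1 - r) * (m - r).factorial := by
    have h3 : (m + 1 - r) = (m - r) + 1 := by omega
    rw [h3, Nat.factorial_succ]
  have h5 : (m + 1).factorial = (m + 1) * m.factorial := Nat.factorial_succ m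
  calc (m + 1 - r) * (m + 1).choose r * (r.factorial * (m - r).factorial)
      = (m + 1).choose r * r.factorial * ((m + 1 - r) * (m - r).factorial) := by ring
    _ = (m + 1).factorial := by rw [← h4, h1]
    _ = (m + 1) * (m.choose r * r.factorial * (m - r).factorial) := by rw [h5, h2]
    _ = (m + 1) * m.choose r * (r.factorial * (m - r).factorial) := by ring

lemma exNum_step (r : ℕ) (F : Set (Σ m : ℕ, Finset (Finset (Fin m)))) {m : ℕ} (h : r ≤ m) :
    (m + 1 - r) * exNum r F (m + 1) ≤ (m + 1) * exNum r F m := by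
  classical
  set S := {k : ℕ | ∃ H : Finset (Finset (Fin (m + 1))),
    IsUniform r H ∧ FamFree F H ∧ H.card = k} with hS
  rcases Set.eq_empty_or_nonempty S with hS0 | hS0
  · have : exNum r F (m + 1) = 0 := by
      rw [exNum, ← hS, hS0, csSup_empty]; rfl
    simp [this]
  · have hbdd : BddAbove S :=
      ⟨Fintype.card (Finset (Fin (m + 1))), fun k ⟨H', _, _, hk⟩ => hk ▸ Finset.card_le_univ H'⟩
    have hmem : exNum r F (m + 1) ∈ S := Nat.sSup_mem hS0 hbdd
    obtain ⟨H, hu, hf, hcard⟩ := hmem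
    rw [← hcard]
    have key : ∀ v : Fin (m + 1), (H.filter (fun e => v ∉ e)).card ≤ exNum r F m := by
      intro v
      apply card_le_exNum_of_embed v.succAbove Fin.succAbove_right_injective
      · exact fun e he => hu e (Finset.mem_filter.1 he).1
      · exact famFree_subset (Finset.filter_subset _ _) hf
      · intro e he w hw
        have hv : v ∉ e := (Finset.mem_filter.1 he).2
        exact Fin.exists_succAbove_eq (fun hwv => hv (hwv ▸ hw))
    have count : ∑ v : Fin (m + 1), (H.filter (fun e => v ∉ e)).card
        = (m + 1 - r) * H.card := by
      have e1 : ∀ v : Fin (m + 1), (H.filter (fun e => v ∉ e)).card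
          = ∑ e ∈ H, if v ∉ e then 1 else 0 := fun v => Finset.card_filter _ _
      rw [Finset.sum_congr rfl (fun v _ => e1 v), Finset.sum_comm]
      have e2 : ∀ e ∈ H, (∑ v : Fin (m + 1), if v ∉ e then 1 else 0) = m + 1 - r := by
        intro e he
        rw [← Finset.card_filter]
        have : Finset.univ.filter (fun v => v ∉ e) = eᶜ := by
          ext v; simp
        rw [this, Finset.card_compl, Fintype.card_fin, hu e he]
      rw [Finset.sum_congr rfl e2, Finset.sum_const, smul_eq_mul, mul_comm]
    calc (m + 1 - r) * H.card = ∑ v : Fin (m + 1), (H.filter (fun e => v ∉ e)).card :=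
          count.symm
      _ ≤ ∑ _v : Fin (m + 1), exNum r F m := Finset.sum_le_sum (fun v _ => key v)
      _ = (m + 1) * exNum r F m := by
          rw [Finset.sum_const, Finset.card_univ, Fintype.card_fin, smul_eq_mul]

lemma exNum_ratio_anti (r : ℕ) (F : Set (Σ m : ℕ, Finset (Finset (Fin m)))) {a b : ℕ}
    (hra : r ≤ a) (hab : a ≤ b) :
    (exNum r F b : ℝ) / (b.choose r : ℝ) ≤ (exNum r F a : ℝ) / (a.choose r : ℝ) := by
  induction b, hab using Nat.le_induction with
  | base => exact le_refl _
  | succ m hm ih =>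
    refine le_trans ?_ ih
    have hrm : r ≤ m := hra.trans hm
    have hstep := exNum_step r F hrm
    have hid := choose_identity hrm
    have hc1 : (0:ℝ) < (m.choose r : ℝ) := by exact_mod_cast Nat.choose_pos hrm
    have hc2 : (0:ℝ) < ((m + 1).choose r : ℝ) := by
      exact_mod_cast Nat.choose_pos (hrm.trans (Nat.le_succ m))
    rw [div_le_div_iff₀ hc2 hc1]
    have hnat : exNum r F (m + 1) * m.choose r ≤ exNum r F m * (m + 1).choose r := by
      have hpos : 0 < m + 1 - r := by omega
      apply Nat.le_of_mul_le_mul_left _ hpos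
      calc (m + 1 - r) * (exNum r F (m + 1) * m.choose r)
          = ((m + 1 - r) * exNum r F (m + 1)) * m.choose r := by ring
        _ ≤ ((m + 1) * exNum r F m) * m.choose r := Nat.mul_le_mul_right _ hstep
        _ = exNum r F m * ((m + 1) * m.choose r) := by ring
        _ = exNum r F m * ((m + 1 - r) * (m + 1).choose r) := by rw [hid]
        _ = (m + 1 - r) * (exNum r F m * (m + 1).choose r) := by ring
    exact_mod_cast hnat

lemma turanDensity_nonneg (r : ℕ) (F : Set (Σ m : ℕ, Finset (Finset (Fin m)))) :
    0 ≤ turanDensity r F := by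
  refine le_csInf ⟨(exNum r F r : ℝ) / (r.choose r : ℝ), r, le_refl r, rfl⟩ ?_
  rintro x ⟨n, hn, rfl⟩
  positivity

lemma turanDensity_le_one (r : ℕ) (F : Set (Σ m : ℕ, Finset (Finset (Fin m)))) :
    turanDensity r F ≤ 1 := by
  have h1 : turanDensity r F ≤ (exNum r F r : ℝ) / (r.choose r : ℝ) := by
    apply csInf_le
    · exact ⟨0, by rintro x ⟨n, hn, rfl⟩; positivity⟩
    · exact ⟨r, le_refl r, rfl⟩
  have h2 : exNum r F r ≤ 1 := by
    have := exNum_le_choose r F r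
    rwa [Nat.choose_self] at this
  rw [Nat.choose_self] at h1
  simp only [Nat.cast_one, div_one] at h1
  have h3 : (exNum r F r : ℝ) ≤ 1 := by exact_mod_cast h2
  linarith

lemma exNum_upper (r : ℕ) (F : Set (Σ m : ℕ, Finset (Finset (Fin m)))) {ε : ℝ}
    (hε : 0 < ε) : ∃ n₁ : ℕ, r ≤ n₁ ∧ ∀ m : ℕ, n₁ ≤ m →
      (exNum r F m : ℝ) ≤ (turanDensity r F + ε) * ((m : ℝ) ^ r / (r.factorial : ℝ)) := by
  have hne : {x : ℝ | ∃ n : ℕ, r ≤ n ∧ x = (exNum r F n : ℝ) / (n.choose r : ℝ)}.Nonempty :=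
    ⟨(exNum r F r : ℝ) / (r.choose r : ℝ), r, le_refl r, rfl⟩
  have hlt : turanDensity r F < turanDensity r F + ε := by linarith
  obtain ⟨x, ⟨n₁, hn₁, rfl⟩, hx⟩ := exists_lt_of_csInf_lt hne hlt
  refine ⟨n₁, hn₁, fun m hm => ?_⟩
  have hmono := exNum_ratio_anti r F hn₁ hm
  have hrm : r ≤ m := hn₁.trans hm
  have hcpos : (0:ℝ) < (m.choose r : ℝ) := by exact_mod_cast Nat.choose_pos hrm
  have h1 : (exNum r F m : ℝ) ≤ (turanDensity r F + ε) * (m.choose r : ℝ) := by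
    rw [← div_le_iff₀ hcpos]
    exact le_of_lt (lt_of_le_of_lt hmono hx)
  refine h1.trans ?_
  apply mul_le_mul_of_nonneg_left _ (by
    have := turanDensity_nonneg r F; linarith)
  rw [le_div_iff₀ (by exact_mod_cast r.factorial_pos : (0:ℝ) < (r.factorial : ℝ))]
  have : m.choose r * r.factorial ≤ m ^ r := by
    rw [mul_comm, ← Nat.descFactorial_eq_factorial_mul_choose]
    exact Nat.descFactorial_le_pow m r
  exact_mod_cast this

lemma pow_sub_bound (t : ℕ) {x y : ℝ} (hx : 0 ≤ x) (hxy : x ≤ y) :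
    2 * (y - x) ^ (t + 2) ≤ 2 * y ^ (t + 2) - 2 * ((t : ℝ) + 2) * x * y ^ (t + 1)
      + ((t : ℝ) + 2) * ((t : ℝ) + 1) * x ^ 2 * y ^ t := by
  induction t with
  | zero => norm_num; nlinarith [sq_nonneg x]
  | succ t ih =>
    have hy : (0:ℝ) ≤ y := hx.trans hxy
    have h2 : (0:ℝ) ≤ y - x := by linarith
    have key : (0:ℝ) ≤ ((t : ℝ) + 2) * ((t : ℝ) + 1) * x ^ 3 * y ^ t := by positivity
    have h3 := mul_le_mul_of_nonneg_left ih h2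
    push_cast
    calc 2 * (y - x) ^ (t + 1 + 2) = (y - x) * (2 * (y - x) ^ (t + 2)) := by ring
      _ ≤ (y - x) * (2 * y ^ (t + 2) - 2 * ((t : ℝ) + 2) * x * y ^ (t + 1)
            + ((t : ℝ) + 2) * ((t : ℝ) + 1) * x ^ 2 * y ^ t) := h3
      _ = (2 * y ^ (t + 1 + 2) - 2 * ((t : ℝ) + 1 + 2) * x * y ^ (t + 1 + 1)
            + ((t : ℝ) + 1 + 2) * ((t : ℝ) + 1 + 1) * x ^ 2 * y ^ (t + 1))
          - ((t : ℝ) + 2) * ((t : ℝ) + 1) * x ^ 3 * y ^ t := by ring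
      _ ≤ 2 * y ^ (t + 1 + 2) - 2 * ((t : ℝ) + 1 + 2) * x * y ^ (t + 1 + 1)
            + ((t : ℝ) + 1 + 2) * ((t : ℝ) + 1 + 1) * x ^ 2 * y ^ (t + 1) := by linarith

end Aux

set_option maxHeartbeats 2000000 in
/-- **Fact (few vertices of small degree in near-extremal hypergraphs).** Let `r ≥ 2`
and let `F` be a family of `r`-graphs. For every `δ > 0` there is `N₀` such that every
`F`-free `r`-graph on `n ≥ N₀` vertices with at least `(π(F)/r! − δ)·n^r` edges has at
most `δ^{1/2}·n` vertices of degree at most `(π(F)/(r−1)! − 4δ^{1/2})·n^{r−1}`. -/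
theorem few_small_degree_vertices (r : ℕ) (hr : 2 ≤ r)
    (F : Set (Σ m : ℕ, Finset (Finset (Fin m)))) (δ : ℝ) (hδ : 0 < δ) :
    ∃ N₀ : ℕ, ∀ n : ℕ, N₀ ≤ n →
      ∀ H : Finset (Finset (Fin n)), IsUniform r H → FamFree F H →
        (turanDensity r F / (r.factorial : ℝ) - δ) * (n : ℝ) ^ r ≤ (H.card : ℝ) →
        ((Finset.univ.filter (fun v : Fin n =>
            (degH H v : ℝ) ≤
              (turanDensity r F / ((r - 1).factorial : ℝ) - 4 * Real.sqrt δ)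
                * (n : ℝ) ^ (r - 1))).card : ℝ)
          ≤ Real.sqrt δ * (n : ℝ) := by
  classical
  by_cases hδ1 : 1 ≤ δ
  · refine ⟨0, fun n _ H _ _ _ => ?_⟩
    have h1 : ((Finset.univ.filter (fun v : Fin n =>
        (degH H v : ℝ) ≤ (turanDensity r F / ((r - 1).factorial : ℝ) - 4 * Real.sqrt δ)
          * (n : ℝ) ^ (r - 1))).card : ℝ) ≤ (n : ℝ) := by
      have h2 : (Finset.univ.filter (fun v : Fin n =>
        (degH H v : ℝ) ≤ (turanDensity r F / ((r - 1).factorial : ℝ) - 4 * Real.sqrt δ)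
          * (n : ℝ) ^ (r - 1))).card ≤ n :=
        le_trans (Finset.card_filter_le _ _) (by simp)
      exact_mod_cast h2
    have hsq : 1 ≤ Real.sqrt δ := by
      rw [show (1:ℝ) = Real.sqrt 1 by simp]
      exact Real.sqrt_le_sqrt hδ1
    nlinarith [Nat.cast_nonneg (α := ℝ) n]
  push_neg at hδ1
  obtain ⟨t, rfl⟩ : ∃ t : ℕ, r = t + 2 := ⟨r - 2, by omega⟩
  have hidx : t + 2 - 1 = t + 1 := by omega
  simp only [hidx]
  set π := turanDensity (t + 2) F with hπdef
  set s := Real.sqrt δ with hs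
  have hs0 : 0 < s := Real.sqrt_pos.2 hδ
  have hs1 : s < 1 := by
    rw [hs, show (1:ℝ) = Real.sqrt 1 by simp]
    exact Real.sqrt_lt_sqrt hδ.le hδ1
  have hs2 : s ^ 2 = δ := Real.sq_sqrt hδ.le
  have hπ0 : 0 ≤ π := turanDensity_nonneg _ F
  have hπ1 : π ≤ 1 := turanDensity_le_one _ F
  set ε' : ℝ := δ / (((t : ℝ) + 2) * ((t : ℝ) + 1)) with hε'
  have ht0 : (0:ℝ) ≤ (t : ℝ) := Nat.cast_nonneg t
  have hε'pos : 0 < ε' := by positivity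
  set ε : ℝ := ε' * ((t + 2).factorial : ℝ) with hε
  have hfacpos : (0:ℝ) < ((t + 2).factorial : ℝ) := by exact_mod_cast (t + 2).factorial_pos
  have hfac1pos : (0:ℝ) < ((t + 1).factorial : ℝ) := by exact_mod_cast (t + 1).factorial_pos
  have hεpos : 0 < ε := by positivity
  obtain ⟨n₁, hn₁r, hup⟩ := exNum_upper (t + 2) F hεpos
  have h1s : (0:ℝ) < 1 - s := by linarith only [hs1]
  refine ⟨⌈(2:ℝ)/δ⌉₊ + ⌈((n₁:ℝ) + 1)/(1 - s)⌉₊ + 1, fun n hn H hu hf hlow => ?_⟩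
  -- basic facts about n
  have hn1 : 1 ≤ n := by omega
  have hN1 : (1:ℝ) ≤ (n : ℝ) := by exact_mod_cast hn1
  have hNpos : (0:ℝ) < (n : ℝ) := by linarith only [hN1]
  have hδN : 2 < δ * n := by
    have hc1 : (⌈(2:ℝ)/δ⌉₊ + 1 : ℕ) ≤ n := by omega
    have hc2 : ((⌈(2:ℝ)/δ⌉₊ + 1 : ℕ) : ℝ) ≤ (n : ℝ) := Nat.cast_le.2 hc1
    push_cast at hc2
    have hc3 := Nat.le_ceil ((2:ℝ)/δ)
    have hc4 : (2:ℝ)/δ < (n : ℝ) := by linarith only [hc2, hc3]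
    rw [div_lt_iff₀ hδ] at hc4
    linarith only [hc4]
  have hske : (n₁ : ℝ) + 1 ≤ (1 - s) * (n : ℝ) := by
    have hc1 : (⌈((n₁:ℝ) + 1)/(1 - s)⌉₊ : ℕ) ≤ n := by omega
    have hc2 : ((⌈((n₁:ℝ) + 1)/(1 - s)⌉₊ : ℕ) : ℝ) ≤ (n : ℝ) := Nat.cast_le.2 hc1
    have hc3 := Nat.le_ceil (((n₁:ℝ) + 1)/(1 - s))
    have hc4 : ((n₁:ℝ) + 1)/(1 - s) ≤ (n : ℝ) := le_trans hc3 hc2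
    rw [div_le_iff₀ h1s] at hc4
    linarith only [hc4]
  by_contra hcon
  push_neg at hcon
  set Z := Finset.univ.filter (fun v : Fin n =>
    (degH H v : ℝ) ≤ (π / ((t + 1).factorial : ℝ) - 4 * s) * (n : ℝ) ^ (t + 1)) with hZ
  -- choose Z₀ ⊆ Z of size k = ⌈s n⌉
  set k := ⌈s * (n : ℝ)⌉₊ with hk
  have hk1 : s * (n : ℝ) ≤ (k : ℝ) := Nat.le_ceil _
  have hk2 : (k : ℝ) ≤ s * (n : ℝ) + 1 := le_of_lt (Nat.ceil_lt_add_one (by positivity))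
  have hkZ : k ≤ Z.card := Nat.ceil_le.2 (le_of_lt hcon)
  have hZn : Z.card ≤ n := le_trans (Finset.card_filter_le _ _) (by simp)
  have hkn : k ≤ n := hkZ.trans hZn
  obtain ⟨Z₀, hZ₀Z, hZ₀card⟩ := Finset.exists_subset_card_eq hkZ
  set H' := H.filter (fun e => ∀ v ∈ e, v ∉ Z₀) with hH'
  -- edge count: H.card ≤ H'.card + sum of degrees over Z₀
  have hcover : H ⊆ H' ∪ Z₀.biUnion (fun v => H.filter (fun e => v ∈ e)) := by
    intro e he
    by_cases hca : ∀ v ∈ e, v ∉ Z₀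
    · exact Finset.mem_union_left _ (Finset.mem_filter.2 ⟨he, hca⟩)
    · push_neg at hca
      obtain ⟨v, hv, hv0⟩ := hca
      exact Finset.mem_union_right _
        (Finset.mem_biUnion.2 ⟨v, hv0, Finset.mem_filter.2 ⟨he, hv⟩⟩)
  have hsplitN : H.card ≤ H'.card + ∑ v ∈ Z₀, degH H v := by
    calc H.card ≤ (H' ∪ Z₀.biUnion (fun v => H.filter (fun e => v ∈ e))).card :=
          Finset.card_le_card hcover
      _ ≤ H'.card + (Z₀.biUnion (fun v => H.filter (fun e => v ∈ e))).card :=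
          Finset.card_union_le _ _
      _ ≤ H'.card + ∑ v ∈ Z₀, (H.filter (fun e => v ∈ e)).card :=
          Nat.add_le_add_left Finset.card_biUnion_le _
  have hsplit : (H.card : ℝ) ≤ (H'.card : ℝ) + ∑ v ∈ Z₀, (degH H v : ℝ) := by
    exact_mod_cast hsplitN
  have hdegsum : ∑ v ∈ Z₀, (degH H v : ℝ)
      ≤ (k : ℝ) * ((π / ((t + 1).factorial : ℝ) - 4 * s) * (n : ℝ) ^ (t + 1)) := by
    have hb : ∀ v ∈ Z₀, (degH H v : ℝ)
        ≤ (π / ((t + 1).factorial : ℝ) - 4 * s) * (n : ℝ) ^ (t + 1) := by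
      intro v hv
      have := (Finset.mem_filter.1 (hZ₀Z hv)).2
      exact this
    calc ∑ v ∈ Z₀, (degH H v : ℝ)
        ≤ Z₀.card • ((π / ((t + 1).factorial : ℝ) - 4 * s) * (n : ℝ) ^ (t + 1)) :=
          Finset.sum_le_card_nsmul _ _ _ hb
      _ = (k : ℝ) * ((π / ((t + 1).factorial : ℝ) - 4 * s) * (n : ℝ) ^ (t + 1)) := by
          rw [hZ₀card, nsmul_eq_mul]
  -- transfer H' to Fin (n - k)
  have hcompl : (Z₀ᶜ : Finset (Fin n)).card = n - k := by
    rw [Finset.card_compl, hZ₀card, Fintype.card_fin]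
  set φ : Fin (n - k) → Fin n :=
    fun i => ((Z₀ᶜ.equivFin.symm (finCongr hcompl.symm i)) : Fin n) with hφ
  have hφinj : Function.Injective φ := by
    intro i j hij
    apply (finCongr hcompl.symm).injective
    apply Z₀ᶜ.equivFin.symm.injective
    exact Subtype.ext hij
  have hH'sub : H' ⊆ H := Finset.filter_subset _ _
  have hu' : IsUniform (t + 2) H' := fun e he => hu e (hH'sub he)
  have hf' : FamFree F H' := famFree_subset hH'sub hf
  have hrange : ∀ e ∈ H', ∀ v ∈ e, ∃ i, φ i = v := by
    intro e he v hv
    have hvZ : v ∉ Z₀ := (Finset.mem_filter.1 he).2 v hv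
    have hvS : v ∈ Z₀ᶜ := Finset.mem_compl.2 hvZ
    refine ⟨finCongr hcompl (Z₀ᶜ.equivFin ⟨v, hvS⟩), ?_⟩
    simp [hφ]
  have hH'le : H'.card ≤ exNum (t + 2) F (n - k) :=
    card_le_exNum_of_embed φ hφinj hu' hf' hrange
  have hcast : ((n - k : ℕ) : ℝ) = (n : ℝ) - (k : ℝ) := by
    rw [Nat.cast_sub hkn]
  have hnkR : (n₁ : ℝ) ≤ ((n - k : ℕ) : ℝ) := by
    rw [hcast]; linarith only [hk2, hske]
  have hnk' : n₁ ≤ n - k := by exact_mod_cast hnkR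
  have hex : (exNum (t + 2) F (n - k) : ℝ)
      ≤ (π + ε) * (((n - k : ℕ) : ℝ) ^ (t + 2) / ((t + 2).factorial : ℝ)) := hup _ hnk'
  -- algebraic endgame
  set p : ℝ := π / ((t + 2).factorial : ℝ) with hp
  have hppos : 0 ≤ p := by positivity
  have hfact2 : ((t + 2).factorial : ℝ)
      = ((t : ℝ) + 2) * (((t : ℝ) + 1) * (t.factorial : ℝ)) := by
    rw [show t + 2 = t + 1 + 1 from rfl, Nat.factorial_succ, Nat.factorial_succ]
    push_cast; ring
  have hfacsucc : ((t + 2).factorial : ℝ) = ((t : ℝ) + 2) * ((t + 1).factorial : ℝ) := by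
    rw [show t + 2 = t + 1 + 1 from rfl, Nat.factorial_succ]
    push_cast; ring
  have htf1 : (1:ℝ) ≤ (t.factorial : ℝ) := by exact_mod_cast t.factorial_pos
  have hple : p * (((t : ℝ) + 2) * ((t : ℝ) + 1)) ≤ 1 := by
    rw [hp, div_mul_eq_mul_div, div_le_one hfacpos, hfact2]
    have hq : (0:ℝ) ≤ ((t : ℝ) + 2) * ((t : ℝ) + 1) := by positivity
    linarith only [mul_le_mul_of_nonneg_left (hπ1.trans htf1) hq]
  have hεp : (π + ε) / ((t + 2).factorial : ℝ) = p + ε' := by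
    rw [hε, hp]; field_simp
  have hTp : π / ((t + 1).factorial : ℝ) = p * ((t : ℝ) + 2) := by
    rw [hp, hfacsucc]; field_simp
  have hchain : (p - δ) * (n : ℝ) ^ (t + 2)
      ≤ (p + ε') * ((n : ℝ) - (k : ℝ)) ^ (t + 2)
        + (k : ℝ) * ((p * ((t : ℝ) + 2) - 4 * s) * (n : ℝ) ^ (t + 1)) := by
    have e3 : (π + ε) * (((n : ℝ) - (k : ℝ)) ^ (t + 2) / ((t + 2).factorial : ℝ))
        = (p + ε') * ((n : ℝ) - (k : ℝ)) ^ (t + 2) := by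
      rw [← hεp]; ring
    calc (p - δ) * (n : ℝ) ^ (t + 2)
        = (π / ((t + 2).factorial : ℝ) - δ) * (n : ℝ) ^ (t + 2) := by rw [hp]
      _ ≤ (H.card : ℝ) := hlow
      _ ≤ (H'.card : ℝ) + ∑ v ∈ Z₀, (degH H v : ℝ) := hsplit
      _ ≤ (π + ε) * (((n - k : ℕ) : ℝ) ^ (t + 2) / ((t + 2).factorial : ℝ))
            + (k : ℝ) * ((π / ((t + 1).factorial : ℝ) - 4 * s) * (n : ℝ) ^ (t + 1)) := by
          have h5 : (H'.card : ℝ) ≤ (exNum (t + 2) F (n - k) : ℝ) := Nat.cast_le.2 hH'le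
          exact add_le_add (h5.trans hex) hdegsum
      _ = (p + ε') * ((n : ℝ) - (k : ℝ)) ^ (t + 2)
            + (k : ℝ) * ((p * ((t : ℝ) + 2) - 4 * s) * (n : ℝ) ^ (t + 1)) := by
          rw [hcast, e3, hTp]
  have hKN : (k : ℝ) ≤ (n : ℝ) := by exact_mod_cast hkn
  have hK0 : (0:ℝ) ≤ (k : ℝ) := Nat.cast_nonneg k
  have hpow := pow_sub_bound t hK0 hKN
  have hpe'0 : (0:ℝ) ≤ p + ε' := by positivity
  have hscaled := mul_le_mul_of_nonneg_left hpow hpe'0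
  have hK2 : (k : ℝ) ^ 2 ≤ δ * (n : ℝ) ^ 2 + 3 * (n : ℝ) := by
    have hq1 : (k : ℝ) ^ 2 ≤ (s * (n : ℝ) + 1) ^ 2 := by
      apply pow_le_pow_left₀ hK0 hk2
    have hq2 : (s * (n : ℝ) + 1) ^ 2 = δ * (n : ℝ) ^ 2 + 2 * (s * (n : ℝ)) + 1 := by
      rw [← hs2]; ring
    have hq3 : s * (n : ℝ) ≤ 1 * (n : ℝ) := mul_le_mul_of_nonneg_right hs1.le hNpos.le
    linarith only [hq1, hq2.le, hq2.ge, hq3, hN1]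
  have hM : (0:ℝ) < (n : ℝ) ^ t := by positivity
  have hp1 : (n : ℝ) ^ (t + 1) = (n : ℝ) ^ t * (n : ℝ) := pow_succ _ _
  have hp2 : (n : ℝ) ^ (t + 2) = (n : ℝ) ^ t * (n : ℝ) ^ 2 := by
    rw [pow_succ, pow_succ]; ring
  rw [hp1, hp2] at hchain
  rw [hp1, hp2] at hscaled
  have hnonneg : (0:ℝ) ≤ ε' * ((t : ℝ) + 2) * (k : ℝ) * ((n : ℝ) ^ t * (n : ℝ)) := by
    positivity
  have key1 : 4 * s * (k : ℝ) * ((n : ℝ) ^ t * (n : ℝ))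
      ≤ (ε' + δ) * ((n : ℝ) ^ t * (n : ℝ) ^ 2)
        + (p + ε') * (((t : ℝ) + 2) * ((t : ℝ) + 1) / 2) * ((k : ℝ) ^ 2 * (n : ℝ) ^ t) := by
    linarith only [hchain, hscaled, hnonneg]
  have key2 : 4 * δ * ((n : ℝ) ^ t * (n : ℝ) ^ 2)
      ≤ 4 * s * (k : ℝ) * ((n : ℝ) ^ t * (n : ℝ)) := by
    have h6 := mul_le_mul_of_nonneg_left hk1
      (show (0:ℝ) ≤ 4 * s * ((n : ℝ) ^ t * (n : ℝ)) by positivity)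
    have h7 : 4 * s * ((n : ℝ) ^ t * (n : ℝ)) * (s * (n : ℝ))
        = 4 * δ * ((n : ℝ) ^ t * (n : ℝ) ^ 2) := by rw [← hs2]; ring
    linarith only [h6, h7.le, h7.ge]
  have key3 : (p + ε') * (((t : ℝ) + 2) * ((t : ℝ) + 1) / 2) * ((k : ℝ) ^ 2 * (n : ℝ) ^ t)
      ≤ δ * ((n : ℝ) ^ t * (n : ℝ) ^ 2) + 3 * ((n : ℝ) ^ t * (n : ℝ)) := by
    have he2 : ε' * (((t : ℝ) + 2) * ((t : ℝ) + 1)) = δ := by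
      rw [hε']; field_simp
    have hcoef : (p + ε') * (((t : ℝ) + 2) * ((t : ℝ) + 1) / 2) ≤ 1 := by
      linarith only [hple, he2.le, he2.ge, hδ1.le]
    have hKM : (k : ℝ) ^ 2 * (n : ℝ) ^ t ≤ (δ * (n : ℝ) ^ 2 + 3 * (n : ℝ)) * (n : ℝ) ^ t :=
      mul_le_mul_of_nonneg_right hK2 hM.le
    have hKM0 : (0:ℝ) ≤ (k : ℝ) ^ 2 * (n : ℝ) ^ t := by positivity
    linarith only [mul_le_mul_of_nonneg_right hcoef hKM0, hKM]
  have hε'δ : ε' ≤ δ / 2 := by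
    rw [hε']
    apply div_le_div_of_nonneg_left hδ.le (by norm_num)
    nlinarith only [ht0, sq_nonneg ((t : ℝ))]
  have hMn : (0:ℝ) < (n : ℝ) ^ t * (n : ℝ) := by positivity
  have h8 : ε' * ((n : ℝ) ^ t * (n : ℝ) ^ 2) ≤ (δ / 2) * ((n : ℝ) ^ t * (n : ℝ) ^ 2) :=
    mul_le_mul_of_nonneg_right hε'δ (by positivity)
  have hcontra : δ * ((n : ℝ) ^ t * (n : ℝ)) * (n : ℝ) ≤ 2 * ((n : ℝ) ^ t * (n : ℝ)) := by
    linarith only [key1, key2, key3, h8]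
  linarith only [mul_lt_mul_of_pos_left hδN hMn, hcontra]
end
end
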